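/- Let X be a real Hilbert space and ε, K > 0. Then there exists a constant μ > 0 (one may take μ = K/ε) such that for every closed convex subset C of X containing the ball εB_X and every x ∈ KB_X, one has ‖x − P_C x‖ ≤ μ(‖x‖ − ‖P_C x‖), where P_C denotes the metric projection onto C. -/

import Mathlib

open Filter Metric Topology
open scoped RealInnerProductSpace

/-- `p` is a metric projection (nearest point) of `x` onto `K`. -/
def IsProjOn {X : Type*} [NormedAddCommGroup X] (K : Set X) (x p : X) : Prop :=
  p ∈ K ∧ ∀ y ∈ K, dist x p ≤ dist x y

theorem stmt12 {X : Type*} [NormedAddCommGroup X] [InnerProductSpace ℝ X] [CompleteSpace X]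
    (ε K : ℝ) (hε : 0 < ε) (hK : 0 < K) :
    ∃ μ : ℝ, 0 < μ ∧ ∀ C : Set X, IsClosed C → Convex ℝ C →
      Metric.closedBall (0 : X) ε ⊆ C → ∀ x : X, ‖x‖ ≤ K → ∀ p : X, IsProjOn C x p →
        ‖x - p‖ ≤ μ * (‖x‖ - ‖p‖) := by
  refine ⟨K / ε, div_pos hK hε, fun C hCcl hCconv hball x hxK p hproj => ?_⟩
  obtain ⟨hpC, hmin⟩ := hproj
  -- variational inequality
  have hinf : ‖x - p‖ = ⨅ w : C, ‖x - w‖ := by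
    haveI : Nonempty C := ⟨⟨p, hpC⟩⟩
    refine le_antisymm (le_ciInf fun w => ?_) (ciInf_le (⟨0, fun r ⟨w, hw⟩ => hw ▸ norm_nonneg _⟩ : BddBelow (Set.range fun w : C => ‖x - w‖)) ⟨p, hpC⟩)
    have := hmin w w.2
    simpa [dist_eq_norm] using this
  have hVI : ∀ w ∈ C, (inner ℝ (x - p) (w - p) : ℝ) ≤ 0 :=
    (norm_eq_iInf_iff_real_inner_le_zero hCconv hpC).mp hinf
  have h0C : (0 : X) ∈ C := hball (by simpa using hε.le)
  -- ‖p‖ ≤ ‖x‖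
  have hip : (inner ℝ (x - p) (p) : ℝ) ≥ 0 := by
    have := hVI 0 h0C
    rw [zero_sub, inner_neg_right] at this
    linarith
  have hxp : (inner ℝ (x) (p) : ℝ) ≥ ‖p‖ ^ 2 := by
    have := hip
    rw [inner_sub_left, real_inner_self_eq_norm_sq] at this
    linarith
  have hple : ‖p‖ ≤ ‖x‖ := by
    rcases eq_or_ne p 0 with h | h
    · simp [h, norm_nonneg]
    · have hiple : (inner ℝ (x) (p) : ℝ) ≤ ‖x‖ * ‖p‖ := real_inner_le_norm x p
      have hp0 : 0 < ‖p‖ := norm_pos_iff.mpr h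
      nlinarith [sq_nonneg (‖x‖ - ‖p‖)]
  rcases eq_or_ne x p with h | h
  · have : ‖p‖ ≤ ‖x‖ := hple
    have : (0:ℝ) ≤ K / ε * (‖x‖ - ‖p‖) :=
      mul_nonneg (div_pos hK hε).le (by linarith)
    rw [h]; simp
  · set d := ‖x - p‖ with hd
    have hd0 : 0 < d := by
      rw [hd, norm_pos_iff]
      exact sub_ne_zero.mpr h
    -- point ε • (x-p)/d ∈ C
    have huC : (ε / d) • (x - p) ∈ C := by
      apply hball
      simp only [mem_closedBall, dist_zero_right, norm_smul, Real.norm_eq_abs,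
        abs_of_pos (div_pos hε hd0)]
      rw [div_mul_cancel₀ _ hd0.ne']
    have h1 := hVI _ huC
    rw [inner_sub_right, inner_smul_right, real_inner_self_eq_norm_sq] at h1
    -- (ε/d) * d^2 ≤ ⟪x-p, p⟫ = ⟪x,p⟫ - ‖p‖²
    have h2 : ε * d ≤ (inner ℝ (x - p) (p) : ℝ) := by
      have : (ε / d) * d ^ 2 = ε * d := by field_simp
      linarith [h1, this.symm ▸ h1]
    have h3 : (inner ℝ (x - p) (p) : ℝ) ≤ ‖x‖ * ‖p‖ - ‖p‖ ^ 2 := by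
      rw [inner_sub_left, real_inner_self_eq_norm_sq]
      linarith [real_inner_le_norm x p]
    have h4 : ε * d ≤ K * (‖x‖ - ‖p‖) := by
      have hpK : ‖p‖ ≤ K := hple.trans hxK
      nlinarith [norm_nonneg p]
    rw [div_mul_eq_mul_div, le_div_iff₀ hε]
    linarith
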